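/- arXiv:2006.05234 — 3 statements merged into one kernel-verified Lean document; each statement's English description precedes it below -/
import Mathlib

section
/- Let I be an ideal of a finite-dimensional Lie algebra L with I ≤ B for a subalgebra B. Then B is a weak c-ideal of L if and only if B/I is a weak c-ideal of L/I. -/
open LieAlgebra Module

section Defs

variable (F : Type*) [Field F] {L : Type*} [LieRing L] [LieAlgebra F L]

/-- `A` is an ideal of `B`, where `A` and `B` are subalgebras of `L`. -/
def IsIdealOf (A B : LieSubalgebra F L) : Prop :=
  A ≤ B ∧ ∀ x ∈ B, ∀ y ∈ A, ⁅x, y⁆ ∈ A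

/-- `C` is a subideal of `L`: there is a chain of subalgebras from `C` to `L`,
each an ideal in the next. -/
def IsSubideal (C : LieSubalgebra F L) : Prop :=
  ∃ (n : ℕ) (f : ℕ → LieSubalgebra F L),
    f 0 = C ∧ f n = ⊤ ∧ ∀ i < n, IsIdealOf F (f i) (f (i + 1))

/-- The core `B_L` of a subalgebra `B`: the largest ideal of `L` contained in `B`. -/
def lieCore (B : LieSubalgebra F L) : LieIdeal F L :=
  sSup {I : LieIdeal F L | (I : Set L) ⊆ (B : Set L)}

/-- `B` is a weak c-ideal of `L`. -/
def IsWeakCIdeal (B : LieSubalgebra F L) : Prop :=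
  ∃ C : LieSubalgebra F L, IsSubideal F C ∧ B ⊔ C = ⊤ ∧
    ((B ⊓ C : LieSubalgebra F L) : Set L) ⊆ (lieCore F B : Set L)

/-- `B` is a c-ideal of `L`. -/
def IsCIdeal (B : LieSubalgebra F L) : Prop :=
  ∃ C : LieSubalgebra F L, (∀ x : L, ∀ y ∈ C, ⁅x, y⁆ ∈ C) ∧ B ⊔ C = ⊤ ∧
    ((B ⊓ C : LieSubalgebra F L) : Set L) ⊆ (lieCore F B : Set L)

/-- `M` is a maximal subalgebra of `L`. -/
def IsMaxSubalgebra (M : LieSubalgebra F L) : Prop :=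
  M ≠ ⊤ ∧ ∀ K : LieSubalgebra F L, M < K → K = ⊤

/-- `B` is a maximal subalgebra of the subalgebra `C`. -/
def IsMaxSubalgebraIn (B C : LieSubalgebra F L) : Prop :=
  B < C ∧ ∀ K : LieSubalgebra F L, B < K → K ≤ C → K = C

/-- `C` is a maximal nilpotent subalgebra of `L`. -/
def IsMaxNilpotentSubalgebra (C : LieSubalgebra F L) : Prop :=
  LieRing.IsNilpotent C ∧
    ∀ D : LieSubalgebra F L, LieRing.IsNilpotent D → C ≤ D → C = D

/-- The quotient map `L → L ⧸ I` as a morphism of Lie algebras. -/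
def quotHom (I : LieIdeal F L) : L →ₗ⁅F⁆ L ⧸ I :=
  { (LieSubmodule.Quotient.mk' I).toLinearMap with
    map_lie' := fun {_ _} => rfl }

end Defs

section Aux

variable {F : Type*} [Field F] {L : Type*} [LieRing L] [LieAlgebra F L]

lemma lieCore_subset (B : LieSubalgebra F L) : (lieCore F B : Set L) ⊆ (B : Set L) := by
  intro x hx
  have hx' : x ∈ (LieSubmodule.toSubmodule (lieCore F B)) := hx
  rw [lieCore, LieSubmodule.sSup_toSubmodule] at hx'
  have hle : sSup {(s : Submodule F L) |
      s ∈ {J : LieIdeal F L | (J : Set L) ⊆ (B : Set L)}} ≤ B.toSubmodule := by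
    apply sSup_le
    rintro p ⟨J, hJ, rfl⟩
    intro y hy
    exact hJ hy
  exact hle hx'

lemma le_lieCore {B : LieSubalgebra F L} {J : LieIdeal F L}
    (h : (J : Set L) ⊆ (B : Set L)) : J ≤ lieCore F B :=
  le_sSup h

end Aux

theorem isWeakCIdeal_iff_quotient {F : Type*} [Field F] {L : Type*} [LieRing L] [LieAlgebra F L]
    [FiniteDimensional F L] (I : LieIdeal F L) (B : LieSubalgebra F L)
    (hIB : (I : Set L) ⊆ (B : Set L)) :
    IsWeakCIdeal F B ↔ IsWeakCIdeal F (B.map (quotHom F I)) := by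
  set π := quotHom F I with hπdef
  have hsurj : Function.Surjective π := fun z => LieSubmodule.Quotient.surjective_mk' (N := I) z
  have hker : ∀ x : L, π x = 0 ↔ x ∈ I := fun x => LieSubmodule.Quotient.mk_eq_zero (N := I)
  have hdiff : ∀ x y : L, π x = π y → x - y ∈ I := by
    intro x y h
    exact (hker _).mp (by rw [map_sub π, h, sub_self])
  -- preimage of `B.map π` is `B`
  have hpre : ∀ x : L, π x ∈ B.map π → x ∈ B := by
    intro x hx
    obtain ⟨b, hb, hbx⟩ := (LieSubalgebra.mem_map _ _ _).mp hx
    have : x - b ∈ I := hdiff _ _ hbx.symm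
    have hxb : x = b + (x - b) := by abel
    rw [hxb]
    exact B.add_mem hb (hIB this)
  have hmaptop : (⊤ : LieSubalgebra F L).map π = ⊤ := by
    ext z
    simp only [LieSubalgebra.mem_map, LieSubalgebra.mem_top, true_and, iff_true]
    exact hsurj z
  constructor
  · rintro ⟨C, ⟨n, f, hf0, hfn, hchain⟩, hsup, hint⟩
    refine ⟨C.map π, ⟨n, fun i => (f i).map π, by simp only [hf0], by simp only [hfn, hmaptop], ?_⟩, ?_, ?_⟩
    · intro i hi
      obtain ⟨hle, hid⟩ := hchain i hi
      refine ⟨(LieSubalgebra.gc_map_comap (f := π)).monotone_l hle, ?_⟩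
      intro x hx y hy
      obtain ⟨a, ha, rfl⟩ := (LieSubalgebra.mem_map _ _ _).mp hx
      obtain ⟨b, hb, rfl⟩ := (LieSubalgebra.mem_map _ _ _).mp hy
      rw [← π.map_lie]
      exact (LieSubalgebra.mem_map _ _ _).mpr ⟨⁅a, b⁆, hid a ha b hb, rfl⟩
    · rw [← (LieSubalgebra.gc_map_comap (f := π)).l_sup, hsup, hmaptop]
    · intro z hz
      have hz' : z ∈ B.map π ⊓ C.map π := hz
      rw [LieSubalgebra.mem_inf] at hz'
      obtain ⟨hzB, hzC⟩ := hz'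
      obtain ⟨c, hc, rfl⟩ := (LieSubalgebra.mem_map _ _ _).mp hzC
      have hcB : c ∈ B := hpre c hzB
      have hcBC : c ∈ (B ⊓ C : LieSubalgebra F L) := (LieSubalgebra.mem_inf _ _ _).mpr ⟨hcB, hc⟩
      have hcCore : c ∈ lieCore F B := hint hcBC
      -- image of the core is an ideal contained in `B.map π`
      have hK : LieIdeal.map π (lieCore F B) ≤ lieCore F (B.map π) := by
        apply le_lieCore
        intro w hw
        obtain ⟨x, hx⟩ := LieIdeal.mem_map_of_surjective hsurj hw
        rw [← hx]
        exact (LieSubalgebra.mem_map _ _ _).mpr ⟨(x : L), lieCore_subset B x.2, rfl⟩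
      exact hK (LieIdeal.mem_map hcCore)
  · rintro ⟨D, ⟨n, f, hf0, hfn, hchain⟩, hsup, hint⟩
    refine ⟨D.comap π, ⟨n, fun i => (f i).comap π, by simp only [hf0], ?_, ?_⟩, ?_, ?_⟩
    · show LieSubalgebra.comap π (f n) = ⊤
      rw [hfn]
      ext x
      constructor
      · intro _; exact LieSubalgebra.mem_top x
      · intro _; exact LieSubalgebra.mem_top (R := F) (π x)
    · intro i hi
      obtain ⟨hle, hid⟩ := hchain i hi
      refine ⟨(LieSubalgebra.gc_map_comap (f := π)).monotone_u hle, ?_⟩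
      intro x hx y hy
      have : π ⁅x, y⁆ ∈ f i := by
        rw [π.map_lie]
        exact hid _ hx _ hy
      exact this
    · rw [eq_top_iff]
      intro x _
      have hx : π x ∈ B.map π ⊔ D := by rw [hsup]; trivial
      have hle : B.map π ⊔ D ≤ (B ⊔ D.comap π).map π := by
        apply sup_le
        · exact (LieSubalgebra.gc_map_comap (f := π)).monotone_l le_sup_left
        · intro d hd
          obtain ⟨y, rfl⟩ := hsurj d
          exact (LieSubalgebra.mem_map _ _ _).mpr
            ⟨y, le_sup_right (α := LieSubalgebra F L) (a := B) hd, rfl⟩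
      obtain ⟨s, hs, hsx⟩ := (LieSubalgebra.mem_map _ _ _).mp (hle hx)
      have hxs : x - s ∈ I := hdiff _ _ hsx.symm
      have : x = s + (x - s) := by abel
      rw [this]
      exact (B ⊔ D.comap π).add_mem hs (le_sup_left (α := LieSubalgebra F L) (b := D.comap π)
        (hIB hxs))
    · intro x hx
      have hx' : x ∈ B ⊓ D.comap π := hx
      rw [LieSubalgebra.mem_inf] at hx'
      obtain ⟨hxB, hxD⟩ := hx'
      have hπx : π x ∈ (B.map π ⊓ D : LieSubalgebra F (L ⧸ I)) := by
        rw [LieSubalgebra.mem_inf]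
        exact ⟨(LieSubalgebra.mem_map _ _ _).mpr ⟨x, hxB, rfl⟩, hxD⟩
      have hcore : π x ∈ lieCore F (B.map π) := hint hπx
      have hJ : LieIdeal.comap π (lieCore F (B.map π)) ≤ lieCore F B := by
        apply le_lieCore
        intro y hy
        have hy' : π y ∈ lieCore F (B.map π) := hy
        exact hpre y (lieCore_subset _ hy')
      exact hJ ((LieIdeal.mem_comap).mpr hcore)
end

section
/- Let L be a finite-dimensional Lie algebra over any field. A one-dimensional subalgebra Fx of L is a weak c-ideal of L if and only if it is a c-ideal of L. -/
open LieAlgebra Module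

theorem one_dim_weakCIdeal_iff_cIdeal {F : Type*} [Field F] {L : Type*} [LieRing L] [LieAlgebra F L]
    [FiniteDimensional F L] (B : LieSubalgebra F L)
    (hB : Module.finrank F B = 1) :
    IsWeakCIdeal F B ↔ IsCIdeal F B := by
  classical
  constructor
  · rintro ⟨C, ⟨n, f, hf0, hfn, hchain⟩, hsup, hinf⟩
    obtain ⟨x, hx0, hxgen⟩ := finrank_eq_one_iff'.mp hB
    have hmono : ∀ j, j ≤ n → f 0 ≤ f j := by
      intro j
      induction j with
      | zero => intro _; exact le_rfl
      | succ k ih =>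
        intro hk
        exact (ih (Nat.le_of_succ_le hk)).trans (hchain k (Nat.lt_of_succ_le hk)).1
    have hex : ∃ i, f i = ⊤ := ⟨n, hfn⟩
    set i := Nat.find hex with hidef
    have hfi : f i = ⊤ := Nat.find_spec hex
    have hin : i ≤ n := Nat.find_le hfn
    rcases Nat.eq_zero_or_pos i with h0 | hpos
    · have hC : C = ⊤ := by rw [← hf0, ← hfi, h0]
      refine ⟨⊤, fun z y hy => trivial, by simp, ?_⟩
      rw [hC] at hinf
      exact hinf
    · set D := f (i - 1) with hD
      have hDne : D ≠ ⊤ := Nat.find_min hex (by omega)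
      have hstep : i - 1 + 1 = i := by omega
      have hDideal := hchain (i - 1) (by omega)
      rw [hstep, hfi] at hDideal
      have hCD : C ≤ D := by rw [← hf0]; exact hmono (i - 1) (by omega)
      have hBD : ¬ B ≤ D := by
        intro hle
        apply hDne
        rw [eq_top_iff, ← hsup]
        exact sup_le hle hCD
      refine ⟨D, fun z => fun y hy => hDideal.2 z trivial y hy, ?_, ?_⟩
      · rw [eq_top_iff, ← hsup]
        exact sup_le le_sup_left (hCD.trans le_sup_right)
      · intro y hy
        rcases hy with ⟨hyB, hyD⟩
        obtain ⟨c, hc⟩ := hxgen ⟨y, hyB⟩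
        have hyc : y = c • (x : L) := by
          have := congrArg (Subtype.val) hc
          simp at this
          exact this.symm
        rcases eq_or_ne c 0 with rfl | hcne
        · have : y = 0 := by simp [hyc]
          rw [this]
          exact (lieCore F B).zero_mem
        · exfalso
          apply hBD
          have hxD : (x : L) ∈ D := by
            have : (x : L) = c⁻¹ • y := by rw [hyc, smul_smul, inv_mul_cancel₀ hcne, one_smul]
            rw [this]
            exact D.smul_mem _ hyD
          intro b hb
          obtain ⟨c', hc'⟩ := hxgen ⟨b, hb⟩
          have : b = c' • (x : L) := by
            have := congrArg (Subtype.val) hc'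
            simp at this
            exact this.symm
          rw [this]
          exact D.smul_mem _ hxD
  · rintro ⟨C, hCideal, hsup, hinf⟩
    refine ⟨C, ⟨1, fun j => if j = 0 then C else ⊤, by simp, by simp, ?_⟩, hsup, hinf⟩
    intro j hj
    interval_cases j
    simp only [if_pos rfl, if_neg one_ne_zero]
    exact ⟨le_top, fun z _ y hy => hCideal z y hy⟩
end

section
/- Let L be a finite-dimensional Lie algebra over any field. All one-dimensional subalgebras of L are weak c-ideals of L if and only if either L³ = 0, or L = A ⊕ B where A is an abelian ideal of L and B is an almost abelian ideal of L. -/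
open LieAlgebra Module

/-- A Lie algebra `M` is almost abelian if `M = M² ⊕ Fx` where `M²` is abelian and
`⁅x, y⁆ = y` for all `y ∈ M²`. -/
def IsAlmostAbelian (F : Type*) [Field F] (M : Type*) [LieRing M] [LieAlgebra F M] :
    Prop :=
  ∃ x : M, (∀ y ∈ LieModule.lowerCentralSeries F M M 1, ⁅x, y⁆ = y) ∧
    (∀ y ∈ LieModule.lowerCentralSeries F M M 1, ∀ z ∈ LieModule.lowerCentralSeries F M M 1, ⁅y, z⁆ = 0) ∧
    IsCompl (LieModule.lowerCentralSeries F M M 1).toSubmodule (Submodule.span F {x})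

section Helpers

open Submodule LieModule

variable {F : Type*} [Field F] {L : Type*} [LieRing L] [LieAlgebra F L]

lemma lie_mem_lcs1 (z w : L) : ⁅z, w⁆ ∈ LieModule.lowerCentralSeries F L L 1 := by
  rw [LieModule.lowerCentralSeries_succ, LieModule.lowerCentralSeries_zero]
  exact LieSubmodule.lie_mem_lie (LieSubmodule.mem_top z) (LieSubmodule.mem_top w)

/-- The span of a single element, as a Lie subalgebra. -/
def spanLine (F : Type*) [Field F] {L : Type*} [LieRing L] [LieAlgebra F L] (b : L) :
    LieSubalgebra F L :=
  { Submodule.span F {b} with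
    lie_mem' := by
      intro u v hu hv
      obtain ⟨c, rfl⟩ := mem_span_singleton.mp hu
      obtain ⟨d, rfl⟩ := mem_span_singleton.mp hv
      have : ⁅c • b, d • b⁆ = (0 : L) := by
        rw [smul_lie, lie_smul, lie_self, smul_zero, smul_zero]
      show ⁅c • b, d • b⁆ ∈ Submodule.span F {b}
      rw [this]; exact zero_mem _ }

lemma mem_spanLine {b u : L} : u ∈ spanLine F b ↔ u ∈ Submodule.span F {b} := Iff.rfl

lemma lieCore_le {B : LieSubalgebra F L} {v : L} (hv : v ∈ lieCore F B) : v ∈ B := by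
  have h : ((lieCore F B : LieIdeal F L) : Submodule F L) ≤ B.toSubmodule := by
    rw [LieIdeal.toLieSubalgebra_toSubmodule, lieCore, LieSubmodule.sSup_toSubmodule]
    apply sSup_le
    rintro p ⟨I, hI, rfl⟩
    intro y hy
    exact hI hy
  exact h hv

lemma finrank_spanLine {b : L} (hb : b ≠ 0) : Module.finrank F (spanLine F b) = 1 := by
  apply finrank_eq_one (⟨b, mem_span_singleton_self b⟩ : spanLine F b)
  · intro h
    apply hb
    exact congrArg Subtype.val h
  · rintro ⟨w, hw⟩
    obtain ⟨c, rfl⟩ := mem_span_singleton.mp hw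
    exact ⟨c, rfl⟩

lemma eq_spanLine {B : LieSubalgebra F L} (hB : Module.finrank F B = 1) :
    ∃ b : L, b ≠ 0 ∧ B = spanLine F b := by
  obtain ⟨v, hv0, hv⟩ := finrank_eq_one_iff'.mp hB
  refine ⟨(v : L), fun h => hv0 (Subtype.ext h), ?_⟩
  apply le_antisymm
  · intro w hw
    obtain ⟨c, hc⟩ := hv ⟨w, hw⟩
    have : c • (v : L) = w := congrArg Subtype.val hc
    exact mem_span_singleton.mpr ⟨c, this⟩
  · intro w hw
    obtain ⟨c, rfl⟩ := mem_span_singleton.mp hw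
    exact B.smul_mem c v.2

end Helpers
section Builders

open Submodule LieModule

variable {F : Type*} [Field F] {L : Type*} [LieRing L] [LieAlgebra F L]

lemma isWeakCIdeal_of_ideal (B : LieSubalgebra F L)
    (h : ∀ z y : L, y ∈ B → ⁅z, y⁆ ∈ B) : IsWeakCIdeal F B := by
  refine ⟨⊤, ⟨0, fun _ => ⊤, rfl, rfl, fun i hi => absurd hi (Nat.not_lt_zero i)⟩,
    by simp, ?_⟩
  intro v hv
  have hvB : v ∈ B := by
    have : v ∈ B ⊓ (⊤ : LieSubalgebra F L) := hv
    exact ((LieSubalgebra.mem_inf _ _ _).mp this).1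
  let I : LieIdeal F L :=
    { toSubmodule := B.toSubmodule
      lie_mem := fun {z y} hy => h z y hy }
  have hle : I ≤ lieCore F B := le_sSup (fun u hu => hu)
  exact hle hvB

lemma isWeakCIdeal_of_compl {b : L} (C : Submodule F L)
    (hC : ∀ z y : L, y ∈ C → ⁅z, y⁆ ∈ C) (hbC : b ∉ C)
    (hsup : C ⊔ Submodule.span F {b} = ⊤) : IsWeakCIdeal F (spanLine F b) := by
  let Cs : LieSubalgebra F L := { C with lie_mem' := fun {u v} _ hv => hC u v hv }
  have hCsmem : ∀ y : L, y ∈ Cs ↔ y ∈ C := fun y => Iff.rfl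
  refine ⟨Cs, ⟨1, fun i => if i = 0 then Cs else ⊤, by simp, by simp, ?_⟩, ?_, ?_⟩
  · intro i hi
    have hi0 : i = 0 := Nat.lt_one_iff.mp hi
    subst hi0
    simp only [if_pos rfl, if_neg (Nat.one_ne_zero)]
    exact ⟨le_top, fun z _ y hy => hC z y hy⟩
  · rw [eq_top_iff]
    intro z _
    have hz : z ∈ C ⊔ Submodule.span F {b} := hsup ▸ Submodule.mem_top
    obtain ⟨c, hc, r, hr, rfl⟩ := Submodule.mem_sup.mp hz
    exact add_mem (le_sup_right (a := spanLine F b) (show c ∈ Cs from hc)) (le_sup_left (b := Cs) (show r ∈ spanLine F b from hr))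
  · intro v hv
    have hv' : v ∈ spanLine F b ⊓ Cs := hv
    rw [LieSubalgebra.mem_inf _ _ _] at hv'
    obtain ⟨hv1, hv2⟩ := hv'
    obtain ⟨μ, rfl⟩ := mem_span_singleton.mp (mem_spanLine.mp hv1)
    by_cases hμ : μ = 0
    · subst hμ
      rw [zero_smul]
      exact (lieCore F (spanLine F b)).zero_mem
    · exfalso
      apply hbC
      have : μ⁻¹ • (μ • b) ∈ C := C.smul_mem _ hv2
      rwa [smul_smul, inv_mul_cancel₀ hμ, one_smul] at this

lemma exists_hyperplane {b : L} (S : Submodule F L) (hbS : b ∉ S) :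
    ∃ C : Submodule F L, S ≤ C ∧ b ∉ C ∧ C ⊔ Submodule.span F {b} = ⊤ := by
  obtain ⟨U, hU⟩ := (Submodule.span F {S.mkQ b}).exists_isCompl
  have hb0 : S.mkQ b ≠ 0 := by
    simpa [Submodule.mkQ_apply, Submodule.Quotient.mk_eq_zero] using hbS
  refine ⟨U.comap S.mkQ, ?_, ?_, ?_⟩
  · intro s hs
    have : S.mkQ s = 0 := by
      simpa [Submodule.mkQ_apply, Submodule.Quotient.mk_eq_zero] using hs
    simp [Submodule.mem_comap, this]
  · intro hb
    have hmem : S.mkQ b ∈ Submodule.span F {S.mkQ b} ⊓ U :=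
      ⟨mem_span_singleton_self _, hb⟩
    have := hU.disjoint.le_bot hmem
    rw [Submodule.mem_bot] at this
    exact hb0 this
  · rw [eq_top_iff]
    intro z _
    have hz : S.mkQ z ∈ Submodule.span F {S.mkQ b} ⊔ U := by
      rw [hU.codisjoint.eq_top]; trivial
    obtain ⟨y, hy, u, hu, hzu⟩ := Submodule.mem_sup.mp hz
    obtain ⟨c, hc⟩ := mem_span_singleton.mp hy
    have hmem : z - c • b ∈ U.comap S.mkQ := by
      rw [Submodule.mem_comap, map_sub, map_smul, hc, ← hzu, add_sub_cancel_left]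
      exact hu
    have hzeq : z = (z - c • b) + c • b := by exact (sub_add_cancel z (c • b)).symm
    rw [hzeq]
    exact add_mem (mem_sup_left hmem)
      (mem_sup_right (Submodule.smul_mem _ _ (mem_span_singleton_self b)))

lemma reverse_master {b : L}
    (h : (∀ z : L, ⁅z, b⁆ ∈ Submodule.span F {b}) ∨
      b ∉ LieModule.lowerCentralSeries F L L 1) :
    IsWeakCIdeal F (spanLine F b) := by
  rcases h with h | h
  · apply isWeakCIdeal_of_ideal
    intro z y hy
    obtain ⟨c, rfl⟩ := mem_span_singleton.mp (mem_spanLine.mp hy)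
    show ⁅z, c • b⁆ ∈ Submodule.span F {b}
    rw [lie_smul]
    exact Submodule.smul_mem _ _ (h z)
  · obtain ⟨C, hSC, hbC, hsup⟩ :=
      exists_hyperplane (LieModule.lowerCentralSeries F L L 1 : LieSubmodule F L L).toSubmodule
        (by simpa using h)
    exact isWeakCIdeal_of_compl C (fun z y hy => hSC (lie_mem_lcs1 z y)) hbC hsup

end Builders
section KeyA

open Submodule LieModule

variable {F : Type*} [Field F] {L : Type*} [LieRing L] [LieAlgebra F L]

lemma keyA (H : ∀ B : LieSubalgebra F L, Module.finrank F B = 1 → IsWeakCIdeal F B)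
    {b : L} (hb : b ≠ 0) :
    (∀ z : L, ⁅z, b⁆ ∈ Submodule.span F {b}) ∨
      ∃ D : LieIdeal F L, b ∉ D ∧ (D : Submodule F L) ⊔ Submodule.span F {b} = ⊤ := by
  obtain ⟨C, ⟨n, f, hf0, hfn, hfi⟩, hsup, hint⟩ := H (spanLine F b) (finrank_spanLine hb)
  by_cases hbC : b ∈ C
  · left
    have hbB : b ∈ spanLine F b := mem_span_singleton_self b
    have hbcore : b ∈ lieCore F (spanLine F b) := by
      apply hint
      exact ((LieSubalgebra.mem_inf _ _ _).mpr ⟨hbB, hbC⟩ : b ∈ spanLine F b ⊓ C)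
    intro z
    have : ⁅z, b⁆ ∈ lieCore F (spanLine F b) := (lieCore F _).lie_mem hbcore
    exact mem_spanLine.mp (lieCore_le this)
  · right
    have hmono : ∀ i, i < n → f i ≤ f (i + 1) := fun i hi => (hfi i hi).1
    have hCle : ∀ i, i ≤ n → C ≤ f i := by
      intro i
      induction i with
      | zero => intro _; rw [hf0]
      | succ k ih =>
        intro hk
        exact le_trans (ih (Nat.le_of_succ_le hk)) (hmono k hk)
    have hcross : ∀ m, m ≤ n → b ∈ f m → ∃ i, i < n ∧ b ∉ f i ∧ b ∈ f (i + 1) := by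
      intro m
      induction m with
      | zero =>
        intro _ hbm
        rw [hf0] at hbm
        exact absurd hbm hbC
      | succ k ih =>
        intro hk hbm
        by_cases hbk : b ∈ f k
        · exact ih (Nat.le_of_succ_le hk) hbk
        · exact ⟨k, hk, hbk, hbm⟩
    obtain ⟨i, hin, hbfi, hbfi1⟩ := hcross n le_rfl (by rw [hfn]; trivial)
    have htop : f (i + 1) = ⊤ := by
      rw [eq_top_iff, ← hsup]
      apply sup_le
      · intro u hu
        obtain ⟨c, rfl⟩ := mem_span_singleton.mp (mem_spanLine.mp hu)
        exact (f (i + 1)).smul_mem c hbfi1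
      · exact hCle (i + 1) hin
    have hideal := (hfi i hin).2
    rw [htop] at hideal
    have hD : ∀ z y : L, y ∈ f i → ⁅z, y⁆ ∈ f i := fun z y hy =>
      hideal z trivial y hy
    let D : LieIdeal F L :=
      { toSubmodule := (f i).toSubmodule
        lie_mem := fun {z y} hy => hD z y hy }
    refine ⟨D, hbfi, ?_⟩
    set S : Submodule F L := (f i).toSubmodule ⊔ Submodule.span F {b} with hS
    have hclosed : ∀ u v : L, u ∈ S → v ∈ S → ⁅u, v⁆ ∈ S := by
      intro u v hu hv
      obtain ⟨d, hd, r, hr, rfl⟩ := Submodule.mem_sup.mp hu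
      obtain ⟨d', hd', r', hr', rfl⟩ := Submodule.mem_sup.mp hv
      obtain ⟨c, rfl⟩ := mem_span_singleton.mp hr
      obtain ⟨c', rfl⟩ := mem_span_singleton.mp hr'
      have hub : ⁅d + c • b, b⁆ ∈ (f i).toSubmodule := by
        have he : ⁅d + c • b, b⁆ = ⁅d, b⁆ := by
          rw [add_lie, smul_lie, lie_self, smul_zero, add_zero]
        rw [he, ← lie_skew]
        exact neg_mem (hD b d hd)
      have hexp : ⁅d + c • b, d' + c' • b⁆ =
          ⁅d + c • b, d'⁆ + c' • ⁅d + c • b, b⁆ := by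
        rw [lie_add, lie_smul]
      rw [hexp]
      have hle1 : (f i).toSubmodule ≤ S := le_sup_left
      exact add_mem (hle1 (hD (d + c • b) d' hd'))
        (hle1 (Submodule.smul_mem _ _ hub))
    let S' : LieSubalgebra F L := { S with lie_mem' := fun {u v} hu hv => hclosed u v hu hv }
    have hle : (⊤ : LieSubalgebra F L) ≤ S' := by
      rw [← hsup]
      apply sup_le
      · intro u hu
        exact (le_sup_right : Submodule.span F {b} ≤ S) (mem_spanLine.mp hu)
      · intro u hu
        exact (le_sup_left : (f i).toSubmodule ≤ S) (hCle i (le_of_lt hin) hu)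
    rw [eq_top_iff]
    intro z _
    exact hle trivial

end KeyA
section Forward

open Submodule LieModule

variable {F : Type*} [Field F] {L : Type*} [LieRing L] [LieAlgebra F L]

lemma forward_main (H : ∀ B : LieSubalgebra F L, Module.finrank F B = 1 → IsWeakCIdeal F B)
    (hL2 : LieModule.lowerCentralSeries F L L 2 ≠ ⊥) :
    ∃ A B : LieIdeal F L, IsLieAbelian A ∧ IsAlmostAbelian F B ∧ IsCompl A B := by
  -- pick a witness for L³ ≠ 0
  have hwit : ∃ z₀ b₀ : L, b₀ ∈ lowerCentralSeries F L L 1 ∧ ⁅z₀, b₀⁆ ≠ 0 := by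
    by_contra hcon
    push_neg at hcon
    apply hL2
    rw [lowerCentralSeries_succ, LieSubmodule.lie_eq_bot_iff]
    intro y _ m hm
    exact hcon y m hm
  obtain ⟨z₀, b₀, hb₀mem, hzb₀⟩ := hwit
  have hb₀ : b₀ ≠ 0 := fun h => hzb₀ (by rw [h, lie_zero])
  -- every nonzero element of L² spans an ideal-line
  have heig : ∀ b : L, b ∈ lowerCentralSeries F L L 1 → ∀ z : L,
      ⁅z, b⁆ ∈ Submodule.span F {b} := by
    intro b hbmem z
    by_cases hb : b = 0
    · subst hb; rw [lie_zero]; exact zero_mem _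
    rcases keyA H hb with h | ⟨D, hbD, hDsup⟩
    · exact h z
    exfalso
    apply hbD
    have hLD : lowerCentralSeries F L L 1 ≤ D := by
      rw [lowerCentralSeries_succ, lowerCentralSeries_zero,
        LieSubmodule.lieIdeal_oper_eq_span, LieSubmodule.lieSpan_le]
      rintro m ⟨u, v, rfl⟩
      have hu : (u : L) ∈ (D : Submodule F L) ⊔ Submodule.span F {b} := by
        rw [hDsup]; trivial
      have hv : ((v : L) : L) ∈ (D : Submodule F L) ⊔ Submodule.span F {b} := by
        rw [hDsup]; trivial
      obtain ⟨d, hd, r, hr, hue⟩ := Submodule.mem_sup.mp hu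
      obtain ⟨d', hd', r', hr', hve⟩ := Submodule.mem_sup.mp hv
      obtain ⟨c, rfl⟩ := mem_span_singleton.mp hr
      obtain ⟨c', rfl⟩ := mem_span_singleton.mp hr'
      have hub : ⁅d + c • b, b⁆ ∈ D := by
        have he : ⁅d + c • b, b⁆ = ⁅d, b⁆ := by
          rw [add_lie, smul_lie, lie_self, smul_zero, add_zero]
        rw [he, ← lie_skew]
        exact neg_mem (D.lie_mem hd)
      have hexp : ⁅d + c • b, d' + c' • b⁆ =
          ⁅d + c • b, d'⁆ + c' • ⁅d + c • b, b⁆ := by rw [lie_add, lie_smul]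
      rw [← hue, ← hve]
      show ⁅d + c • b, d' + c' • b⁆ ∈ D
      rw [hexp]
      exact add_mem (D.lie_mem hd') (Submodule.smul_mem _ _ hub)
    exact hLD hbmem
  -- the eigenvalue function
  have hφC : ∀ z : L, ∃ c : F, ⁅z, b₀⁆ = c • b₀ := by
    intro z
    obtain ⟨c, hc⟩ := mem_span_singleton.mp (heig b₀ hb₀mem z)
    exact ⟨c, hc.symm⟩
  choose φ hφ using hφC
  have heigall : ∀ z b : L, b ∈ lowerCentralSeries F L L 1 → ⁅z, b⁆ = φ z • b := by
    intro z b hbm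
    by_cases hb0 : b = 0
    · subst hb0; simp
    by_cases hspan : b ∈ Submodule.span F {b₀}
    · obtain ⟨t, rfl⟩ := mem_span_singleton.mp hspan
      rw [lie_smul, hφ z, smul_comm]
    · obtain ⟨c, hc⟩ := mem_span_singleton.mp (heig b hbm z)
      obtain ⟨e, he⟩ := mem_span_singleton.mp (heig (b + b₀) (add_mem hbm hb₀mem) z)
      rw [smul_add, lie_add, ← hc, hφ z] at he
      -- he : e • b + e • b₀ = c • b + φ z • b₀
      have hkey : (e - c) • b = (φ z - e) • b₀ := by
        rw [sub_smul, sub_smul, sub_eq_sub_iff_add_eq_add, he, add_comm]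
      by_cases hec : e = c
      · have h0 : (φ z - e) • b₀ = 0 := by rw [← hkey, hec, sub_self, zero_smul]
        have hφe : φ z = e := by
          rcases smul_eq_zero.mp h0 with h | h
          · exact sub_eq_zero.mp h
          · exact absurd h hb₀
        rw [← hc, hφe, hec]
      · exfalso
        apply hspan
        have hbeq : b = (e - c)⁻¹ • ((φ z - e) • b₀) := by
          rw [← hkey, smul_smul, inv_mul_cancel₀ (sub_ne_zero.mpr hec), one_smul]
        rw [hbeq]
        exact Submodule.smul_mem _ _ (Submodule.smul_mem _ _ (mem_span_singleton_self b₀))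
  -- properties of φ
  have hφ0 : ∀ b : L, b ∈ lowerCentralSeries F L L 1 → φ b = 0 := by
    intro b hbm
    by_cases hb0 : b = 0
    · subst hb0
      have := hφ (0 : L)
      rw [zero_lie] at this
      rcases smul_eq_zero.mp this.symm with h | h
      · exact h
      · exact absurd h hb₀
    · have h1 := heigall b b hbm
      rw [lie_self] at h1
      rcases smul_eq_zero.mp h1.symm with h | h
      · exact h
      · exact absurd h hb0
  have hadd : ∀ y z : L, φ (y + z) = φ y + φ z := by
    intro y z
    have h1 := hφ (y + z)
    rw [add_lie, hφ y, hφ z, ← add_smul] at h1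
    have h2 : (φ (y + z) - (φ y + φ z)) • b₀ = 0 := by
      rw [sub_smul, ← h1, sub_self]
    rcases smul_eq_zero.mp h2 with h | h
    · exact sub_eq_zero.mp h
    · exact absurd h hb₀
  have hsmul : ∀ (c : F) (z : L), φ (c • z) = c * φ z := by
    intro c z
    have h1 := hφ (c • z)
    rw [smul_lie, hφ z, smul_smul] at h1
    have h2 : (φ (c • z) - c * φ z) • b₀ = 0 := by
      rw [sub_smul, ← h1, sub_self]
    rcases smul_eq_zero.mp h2 with h | h
    · exact sub_eq_zero.mp h
    · exact absurd h hb₀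
  have hsub : ∀ y z : L, φ (y - z) = φ y - φ z := by
    intro y z
    have h1 : y - z + z = y := sub_add_cancel y z
    have h2 := hadd (y - z) z
    rw [h1] at h2
    exact (eq_sub_of_add_eq h2.symm)
  -- the element x with φ x = 1
  have hφz₀ : φ z₀ ≠ 0 := by
    intro h
    apply hzb₀
    rw [hφ z₀, h, zero_smul]
  set x : L := (φ z₀)⁻¹ • z₀ with hxdef
  have hx1 : φ x = 1 := by rw [hxdef, hsmul, inv_mul_cancel₀ hφz₀]
  -- L² is abelian
  have hab : ∀ b c : L, b ∈ lowerCentralSeries F L L 1 →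
      c ∈ lowerCentralSeries F L L 1 → ⁅b, c⁆ = 0 := by
    intro b c hbm hcm
    rw [heigall b c hcm, hφ0 b hbm, zero_smul]
  -- centrality of the kernel part
  have hcent : ∀ a : L, φ a = 0 → ⁅x, a⁆ = 0 → ∀ z : L, ⁅z, a⁆ = 0 := by
    intro a ha1 ha2 z
    have hkφ : φ (z - φ z • x) = 0 := by
      rw [hsub, hsmul, hx1, mul_one, sub_self]
    set k : L := z - φ z • x with hkdef
    have hzk : k + φ z • x = z := sub_add_cancel z _
    have hz : ⁅z, a⁆ = ⁅k, a⁆ := by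
      calc ⁅z, a⁆ = ⁅k + φ z • x, a⁆ := by rw [hzk]
        _ = ⁅k, a⁆ + φ z • ⁅x, a⁆ := by rw [add_lie, smul_lie]
        _ = ⁅k, a⁆ := by rw [ha2, smul_zero, add_zero]
    rw [hz]
    have hcm : ⁅k, a⁆ ∈ lowerCentralSeries F L L 1 := lie_mem_lcs1 k a
    have h1 : ⁅k, a⁆ = ⁅x, ⁅k, a⁆⁆ := by
      rw [heigall x _ hcm, hx1, one_smul]
    have h2 : ⁅x, ⁅k, a⁆⁆ = ⁅⁅x, k⁆, a⁆ + ⁅k, ⁅x, a⁆⁆ := leibniz_lie x k a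
    have h3 : ⁅⁅x, k⁆, a⁆ = 0 := by
      rw [← lie_skew, heigall a _ (lie_mem_lcs1 x k), ha1, zero_smul, neg_zero]
    rw [h1, h2, h3, ha2, lie_zero, zero_add]
  -- the abelian ideal A
  let A' : Submodule F L :=
    { carrier := {a | φ a = 0 ∧ ⁅x, a⁆ = 0}
      add_mem' := fun {u v} hu hv =>
        ⟨by rw [hadd, hu.1, hv.1, add_zero], by rw [lie_add, hu.2, hv.2, add_zero]⟩
      zero_mem' := ⟨hφ0 0 (zero_mem _), lie_zero x⟩
      smul_mem' := fun c u hu =>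
        ⟨by rw [hsmul, hu.1, mul_zero], by rw [lie_smul, hu.2, smul_zero]⟩ }
  have hmemA' : ∀ a : L, a ∈ A' ↔ φ a = 0 ∧ ⁅x, a⁆ = 0 := fun a => Iff.rfl
  have hA'cent : ∀ z a : L, a ∈ A' → ⁅z, a⁆ = 0 := fun z a ha =>
    hcent a ha.1 ha.2 z
  let AI : LieIdeal F L :=
    { toSubmodule := A'
      lie_mem := fun {z a} ha => by
        show ⁅z, a⁆ ∈ A'
        rw [hA'cent z a ha]
        exact A'.zero_mem }
  have hAab : IsLieAbelian AI := by
    constructor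
    intro u v
    apply Subtype.ext
    show ⁅(u : L), (v : L)⁆ = 0
    exact hA'cent (u : L) (v : L) v.2
  -- the almost abelian ideal B
  set B' : Submodule F L :=
    (lowerCentralSeries F L L 1 : LieSubmodule F L L).toSubmodule ⊔ Submodule.span F {x}
    with hB'def
  have hlcsB' : (lowerCentralSeries F L L 1 : LieSubmodule F L L).toSubmodule ≤ B' :=
    le_sup_left
  let BI : LieIdeal F L :=
    { toSubmodule := B'
      lie_mem := fun {z v} _ => hlcsB' (lie_mem_lcs1 z v) }
  -- complementarity
  have hdis : AI ⊓ BI = ⊥ := by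
    apply (LieSubmodule.toSubmodule_inj _ _).mp
    rw [LieSubmodule.inf_toSubmodule, LieSubmodule.bot_toSubmodule]
    rw [eq_bot_iff]
    rintro v ⟨hvA, hvB⟩
    obtain ⟨w, hw, s, hs, rfl⟩ := Submodule.mem_sup.mp hvB
    obtain ⟨μ, rfl⟩ := mem_span_singleton.mp hs
    have hφv : φ (w + μ • x) = μ := by
      rw [hadd, hφ0 w hw, hsmul, hx1, mul_one, zero_add]
    have hμ : μ = 0 := by rw [← hφv]; exact hvA.1
    rw [hμ, zero_smul, add_zero] at hvA ⊢
    have hxw : ⁅x, w⁆ = w := by rw [heigall x w hw, hx1, one_smul]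
    rw [Submodule.mem_bot, ← hxw]
    exact hvA.2
  have hcod : AI ⊔ BI = ⊤ := by
    apply (LieSubmodule.toSubmodule_inj _ _).mp
    rw [LieSubmodule.sup_toSubmodule, LieSubmodule.top_toSubmodule]
    rw [eq_top_iff]
    intro z _
    set k : L := z - φ z • x with hkdef
    have hkφ : φ k = 0 := by
      rw [hkdef, hsub, hsmul, hx1, mul_one, sub_self]
    have haA : k - ⁅x, k⁆ ∈ A' := by
      constructor
      · rw [hsub, hkφ, hφ0 _ (lie_mem_lcs1 x k), sub_zero]
      · rw [lie_sub, heigall x _ (lie_mem_lcs1 x k), hx1, one_smul, sub_self]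
    have hzeq : z = (k - ⁅x, k⁆) + (⁅x, k⁆ + φ z • x) := by
      rw [hkdef]; abel
    rw [hzeq]
    apply Submodule.add_mem_sup haA
    exact B'.add_mem (hlcsB' (lie_mem_lcs1 x k))
      ((le_sup_right : Submodule.span F {x} ≤ B')
        (Submodule.smul_mem _ _ (mem_span_singleton_self x)))
  have hcompl : IsCompl AI BI := ⟨disjoint_iff.mpr hdis, codisjoint_iff.mpr hcod⟩
  refine ⟨AI, BI, hAab, ?_, hcompl⟩
  -- B is almost abelian
  have hxB : x ∈ BI :=
    (le_sup_right : Submodule.span F {x} ≤ B') (mem_span_singleton_self x)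
  have hM1 : ∀ y : BI, y ∈ lowerCentralSeries F BI BI 1 →
      (y : L) ∈ lowerCentralSeries F L L 1 := by
    intro y hy
    let N : LieSubmodule F BI BI :=
      { carrier := {v : BI | (v : L) ∈ lowerCentralSeries F L L 1}
        add_mem' := fun {u v} hu hv => by
          show ((u + v : BI) : L) ∈ lowerCentralSeries F L L 1
          exact (lowerCentralSeries F L L 1).add_mem hu hv
        zero_mem' := by
          show ((0 : BI) : L) ∈ lowerCentralSeries F L L 1
          exact (lowerCentralSeries F L L 1).zero_mem
        smul_mem' := fun c v hv => by
          show ((c • v : BI) : L) ∈ lowerCentralSeries F L L 1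
          exact (lowerCentralSeries F L L 1).smul_mem c hv
        lie_mem := fun {u v} _ => lie_mem_lcs1 (u : L) (v : L) }
    have hle : lowerCentralSeries F BI BI 1 ≤ N := by
      rw [LieModule.lowerCentralSeries_succ, LieSubmodule.lieIdeal_oper_eq_span,
        LieSubmodule.lieSpan_le]
      rintro m ⟨u, v, rfl⟩
      exact lie_mem_lcs1 ((u : BI) : L) ((v : BI) : L)
    exact hle hy
  have hM2 : ∀ (w : L) (hw : w ∈ lowerCentralSeries F L L 1),
      (⟨w, hlcsB' hw⟩ : BI) ∈ lowerCentralSeries F BI BI 1 := by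
    intro w hw
    have hxw : ⁅(⟨x, hxB⟩ : BI), (⟨w, hlcsB' hw⟩ : BI)⁆ = (⟨w, hlcsB' hw⟩ : BI) := by
      apply Subtype.ext
      show ⁅x, w⁆ = w
      rw [heigall x w hw, hx1, one_smul]
    rw [← hxw, LieModule.lowerCentralSeries_succ]
    exact LieSubmodule.lie_mem_lie (LieSubmodule.mem_top _) (LieSubmodule.mem_top _)
  refine ⟨⟨x, hxB⟩, ?_, ?_, ?_⟩
  · intro y hy
    apply Subtype.ext
    show ⁅x, (y : L)⁆ = (y : L)
    rw [heigall x _ (hM1 y hy), hx1, one_smul]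
  · intro y hy z hz
    apply Subtype.ext
    show ⁅(y : L), (z : L)⁆ = 0
    exact hab _ _ (hM1 y hy) (hM1 z hz)
  · constructor
    · rw [disjoint_iff, eq_bot_iff]
      rintro v ⟨hv1, hv2⟩
      obtain ⟨c, rfl⟩ := mem_span_singleton.mp hv2
      have hc0 : φ ((c • (⟨x, hxB⟩ : BI) : BI) : L) = 0 := hφ0 _ (hM1 _ hv1)
      have hcoe : ((c • (⟨x, hxB⟩ : BI) : BI) : L) = c • x := rfl
      rw [hcoe, hsmul, hx1, mul_one] at hc0
      rw [Submodule.mem_bot, hc0, zero_smul]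
    · rw [codisjoint_iff, eq_top_iff]
      intro v _
      have hvmem : (v : L) ∈ B' := v.2
      obtain ⟨w, hw, s, hs, hsum⟩ := Submodule.mem_sup.mp hvmem
      obtain ⟨c, rfl⟩ := mem_span_singleton.mp hs
      have hveq : v = (⟨w, hlcsB' hw⟩ : BI) + c • (⟨x, hxB⟩ : BI) := by
        apply Subtype.ext
        show (v : L) = w + c • x
        exact hsum.symm
      rw [hveq]
      exact Submodule.add_mem_sup (hM2 w hw)
        (Submodule.smul_mem _ _ (mem_span_singleton_self _))

end Forward
section Reverse

open Submodule LieModule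

variable {F : Type*} [Field F] {L : Type*} [LieRing L] [LieAlgebra F L]

lemma structured_prop {A Bi : LieIdeal F L} (hA : IsLieAbelian A)
    (hAB : IsAlmostAbelian F Bi) (hcompl : IsCompl A Bi) (b : L) :
    (∀ z : L, ⁅z, b⁆ ∈ Submodule.span F {b}) ∨
      b ∉ LieModule.lowerCentralSeries F L L 1 := by
  obtain ⟨x, hx1, hx2, hxc⟩ := hAB
  have hdecomp : ∀ z : L, z ∈ A.toSubmodule ⊔ Bi.toSubmodule := by
    intro z
    rw [← LieSubmodule.sup_toSubmodule, codisjoint_iff.mp hcompl.codisjoint,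
      LieSubmodule.top_toSubmodule]
    trivial
  have hAcent : ∀ a z : L, a ∈ A → ⁅z, a⁆ = 0 := by
    intro a z ha
    obtain ⟨a', ha', v, hv, rfl⟩ := Submodule.mem_sup.mp (hdecomp z)
    rw [add_lie]
    have h1 : ⁅a', a⁆ = 0 := by
      have ht := hA.trivial (⟨a', ha'⟩ : A) (⟨a, ha⟩ : A)
      exact congrArg Subtype.val ht
    have h2 : ⁅v, a⁆ = 0 := by
      have hmA : ⁅v, a⁆ ∈ A := A.lie_mem ha
      have hmB : ⁅v, a⁆ ∈ Bi := by
        rw [← lie_skew]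
        exact neg_mem (Bi.lie_mem hv)
      have hbot := hcompl.disjoint.le_bot ((LieSubmodule.mem_inf _ _ _).mpr ⟨hmA, hmB⟩)
      exact (LieSubmodule.mem_bot _).mp hbot
    rw [h1, h2, add_zero]
  -- the image of (B)² in L
  let W : Submodule F L :=
    { carrier := {w | ∃ y : Bi, y ∈ lowerCentralSeries F Bi Bi 1 ∧ (y : L) = w}
      add_mem' := by
        rintro u v ⟨y, hy, rfl⟩ ⟨y', hy', rfl⟩
        exact ⟨y + y', add_mem hy hy', rfl⟩
      zero_mem' := ⟨0, zero_mem _, rfl⟩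
      smul_mem' := by
        rintro c v ⟨y, hy, rfl⟩
        exact ⟨c • y, (lowerCentralSeries F Bi Bi 1).smul_mem c hy, rfl⟩ }
  have hWbr : ∀ v y : Bi, y ∈ lowerCentralSeries F Bi Bi 1 →
      ∃ c : F, ⁅(v : L), (y : L)⁆ = c • (y : L) := by
    intro v y hy
    have hv : v ∈ (lowerCentralSeries F Bi Bi 1).toSubmodule ⊔ Submodule.span F {x} := by
      rw [codisjoint_iff.mp hxc.codisjoint]; trivial
    obtain ⟨u, hu, s, hs, hsum⟩ := Submodule.mem_sup.mp hv
    obtain ⟨c, rfl⟩ := mem_span_singleton.mp hs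
    refine ⟨c, ?_⟩
    have hbr : ⁅v, y⁆ = (c • y : Bi) := by
      calc ⁅v, y⁆ = ⁅u + c • x, y⁆ := by rw [hsum]
        _ = ⁅u, y⁆ + c • ⁅x, y⁆ := by rw [add_lie, smul_lie]
        _ = (c • y : Bi) := by rw [hx2 u hu y hy, hx1 y hy, zero_add]
    exact congrArg Subtype.val hbr
  have hWideal : ∀ z w : L, w ∈ W → ⁅z, w⁆ ∈ Submodule.span F {w} := by
    intro z w hw
    obtain ⟨y, hy, rfl⟩ := hw
    obtain ⟨a, ha, v, hv, rfl⟩ := Submodule.mem_sup.mp (hdecomp z)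
    rw [add_lie]
    have h1 : ⁅a, (y : L)⁆ = 0 := by
      rw [← lie_skew, hAcent a _ ha, neg_zero]
    obtain ⟨c, hc⟩ := hWbr ⟨v, hv⟩ y hy
    rw [h1, zero_add]
    show ⁅v, (y : L)⁆ ∈ Submodule.span F {(y : L)}
    have hc' : ⁅v, (y : L)⁆ = c • (y : L) := hc
    rw [hc']
    exact Submodule.smul_mem _ _ (mem_span_singleton_self _)
  have hL2W : ∀ z z' : L, ⁅z, z'⁆ ∈ W := by
    intro z z'
    obtain ⟨a, ha, v, hv, rfl⟩ := Submodule.mem_sup.mp (hdecomp z)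
    obtain ⟨a', ha', v', hv', rfl⟩ := Submodule.mem_sup.mp (hdecomp z')
    have hexp : ⁅a + v, a' + v'⁆ = ⁅v, v'⁆ := by
      rw [lie_add, add_lie, add_lie]
      have e1 : ⁅a, a'⁆ = 0 := hAcent a' a ha'
      have e2 : ⁅v, a'⁆ = 0 := hAcent a' v ha'
      have e3 : ⁅a, v'⁆ = 0 := by rw [← lie_skew, hAcent a v' ha, neg_zero]
      rw [e1, e2, e3, zero_add, zero_add, zero_add]
    rw [hexp]
    refine ⟨⁅(⟨v, hv⟩ : Bi), (⟨v', hv'⟩ : Bi)⁆, ?_, rfl⟩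
    exact lie_mem_lcs1 (⟨v, hv⟩ : Bi) (⟨v', hv'⟩ : Bi)
  have hLCS1W : ∀ w : L, w ∈ LieModule.lowerCentralSeries F L L 1 → w ∈ W := by
    have hWlie : ∀ {z w : L}, w ∈ W → ⁅z, w⁆ ∈ W := by
      intro z w hw
      obtain ⟨c, hc⟩ := mem_span_singleton.mp (hWideal z w hw)
      rw [← hc]
      exact W.smul_mem c hw
    let WI : LieIdeal F L := { toSubmodule := W, lie_mem := fun {z w} hw => hWlie hw }
    have hle : LieModule.lowerCentralSeries F L L 1 ≤ WI := by
      rw [LieModule.lowerCentralSeries_succ, LieModule.lowerCentralSeries_zero,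
        LieSubmodule.lieIdeal_oper_eq_span, LieSubmodule.lieSpan_le]
      rintro m ⟨u, v, rfl⟩
      exact hL2W (u : L) ((v : L) : L)
    exact fun w hw => hle hw
  by_cases hbW : b ∈ LieModule.lowerCentralSeries F L L 1
  · exact Or.inl (fun z => hWideal z b (hLCS1W b hbW))
  · exact Or.inr hbW

end Reverse
theorem all_one_dim_weakCIdeal_iff {F : Type*} [Field F] {L : Type*} [LieRing L] [LieAlgebra F L]
    [FiniteDimensional F L] :
    (∀ B : LieSubalgebra F L, Module.finrank F B = 1 → IsWeakCIdeal F B) ↔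
      LieModule.lowerCentralSeries F L L 2 = ⊥ ∨
        ∃ A B : LieIdeal F L, IsLieAbelian A ∧ IsAlmostAbelian F B ∧
          IsCompl A B := by
  constructor
  · intro H
    by_cases h2 : LieModule.lowerCentralSeries F L L 2 = ⊥
    · exact Or.inl h2
    · exact Or.inr (forward_main H h2)
  · intro h B hB
    obtain ⟨b, hb, rfl⟩ := eq_spanLine hB
    apply reverse_master
    rcases h with h2 | ⟨A, Bi, hA, hAB, hcompl⟩
    · by_cases hbm : b ∈ LieModule.lowerCentralSeries F L L 1
      · left
        intro z
        have hz : ⁅z, b⁆ ∈ LieModule.lowerCentralSeries F L L 2 := by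
          rw [LieModule.lowerCentralSeries_succ]
          exact LieSubmodule.lie_mem_lie (LieSubmodule.mem_top z) hbm
        rw [h2] at hz
        rw [(LieSubmodule.mem_bot _).mp hz]
        exact zero_mem _
      · right; exact hbm
    · exact structured_prop hA hAB hcompl b
end
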